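/- Let a be a real number with a < 1, and let x ∈ (0, 1/2) be real. Then lim_{t→1⁻} F₂(a; 1, 1; 2, 2; t x, t(1−x)) − (1/(1−a)) (1−x)^{−a} ₂F₁(1, a−1; 2; x/(x−1)) = − x^{2−a} / ((1−a)(2−a) x (1−x)), and this difference is nonzero. In particular, the claimed formula F₂(a; b₁, b₂; c₁, c₂; x, 1−x) = (Γ(c₂)Γ(c₂−a−b₂)/(Γ(c₂−a)Γ(c₂−b₂))) (1−x)^{−a} ₃F₂(a, c₁−b₁, a−c₂+1; c₁, a+b₂−c₂+1; x/(x−1)) is false for the parameters (a; 1, 1; 2, 2), even though the hypothesis Re(c₂−a−b₂) > 0 holds. -/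

import Mathlib

open Topology Filter

/-- Pochhammer symbol `(x)_k = ∏_{i=0}^{k-1} (x + i)` for a real number `x`. -/
noncomputable def pochR (x : ℝ) (k : ℕ) : ℝ := ∏ i ∈ Finset.range k, (x + i)

/-- Appell's `F₂` double series (real version). -/
noncomputable def appellF2R (a b₁ b₂ c₁ c₂ x y : ℝ) : ℝ :=
  ∑' p : ℕ × ℕ, pochR a (p.1 + p.2) * pochR b₁ p.1 * pochR b₂ p.2 /
    (pochR c₁ p.1 * pochR c₂ p.2 * (Nat.factorial p.1 : ℝ) * (Nat.factorial p.2 : ℝ)) *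
    x ^ p.1 * y ^ p.2

/-- Gauss hypergeometric series `₂F₁(a,b;c;x)` (real version). -/
noncomputable def hyp2F1R (a b c x : ℝ) : ℝ :=
  ∑' k : ℕ, pochR a k * pochR b k / (pochR c k * (Nat.factorial k : ℝ)) * x ^ k

lemma pochR_zero (x : ℝ) : pochR x 0 = 1 := rfl

lemma pochR_succ (x : ℝ) (k : ℕ) : pochR x (k+1) = pochR x k * (x + k) :=
  Finset.prod_range_succ _ _

lemma pochR_add (x : ℝ) (m n : ℕ) : pochR x (m + n) = pochR x m * pochR (x + m) n := by
  unfold pochR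
  rw [Finset.prod_range_add]
  congr 1
  refine Finset.prod_congr rfl fun i _ => ?_
  push_cast; ring

lemma pochR_one (k : ℕ) : pochR 1 k = k.factorial := by
  induction k with
  | zero => simp [pochR_zero]
  | succ n ih => rw [pochR_succ, ih]; push_cast [Nat.factorial_succ]; ring

lemma pochR_two (k : ℕ) : pochR 2 k = (k+1).factorial := by
  induction k with
  | zero => simp [pochR_zero]
  | succ n ih => rw [pochR_succ, ih]; push_cast [Nat.factorial_succ]; ring

lemma abs_pochR_le (x : ℝ) (k : ℕ) : |pochR x k| ≤ pochR |x| k := by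
  unfold pochR
  rw [Finset.abs_prod]
  refine Finset.prod_le_prod (fun i _ => abs_nonneg _) fun i _ => ?_
  exact (abs_add_le _ _).trans (by simp)

lemma pochR_nonneg {x : ℝ} (hx : 0 ≤ x) (k : ℕ) : 0 ≤ pochR x k :=
  Finset.prod_nonneg fun i _ => by positivity

noncomputable def binC (b : ℝ) (k : ℕ) : ℝ := pochR b k / k.factorial

lemma binC_zero (b : ℝ) : binC b 0 = 1 := by simp [binC, pochR_zero]

lemma binC_succ (b : ℝ) (k : ℕ) : (k+1 : ℝ) * binC b (k+1) = binC b k * (b + k) := by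
  unfold binC
  rw [pochR_succ, Nat.factorial_succ]
  push_cast
  field_simp

lemma ev_ratio {c ρ w : ℝ} (hw : 0 ≤ w) (h : w < ρ) :
    ∀ᶠ n : ℕ in atTop, (c + n) * w ≤ ρ * n := by
  filter_upwards [eventually_ge_atTop ⌈c * w / (ρ - w)⌉₊] with n hn
  have h2 : c * w / (ρ - w) ≤ (n : ℝ) := (Nat.ceil_le.1 hn)
  have h3 : c * w ≤ (n : ℝ) * (ρ - w) := by
    rw [div_le_iff₀ (by linarith)] at h2; linarith
  nlinarith

lemma summable_binC {b w : ℝ} (hw : |w| < 1) : Summable (fun k => binC b k * w ^ k) := by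
  set ρ := (1 + |w|) / 2 with hρdef
  have hρ1 : ρ < 1 := by simp only [hρdef]; linarith
  have hwρ : |w| < ρ := by simp only [hρdef]; linarith
  have hρ0 : 0 ≤ ρ := le_trans (abs_nonneg w) hwρ.le
  refine summable_of_ratio_norm_eventually_le hρ1 ?_
  filter_upwards [ev_ratio (c := |b|) (abs_nonneg w) hwρ] with n hn
  have hn1 : (0:ℝ) < (n:ℝ) + 1 := by positivity
  have key : ((n:ℝ)+1) * (binC b (n+1) * w ^ (n+1)) = (binC b n * w ^ n) * ((b + n) * w) := by
    rw [pow_succ]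
    linear_combination (w ^ n * w) * binC_succ b n
  have habs : ((n:ℝ)+1) * |binC b (n+1) * w ^ (n+1)| = |binC b n * w ^ n| * (|b + n| * |w|) := by
    rw [← abs_of_pos hn1, ← abs_mul, key, abs_mul, abs_mul, abs_mul]
  rw [Real.norm_eq_abs, Real.norm_eq_abs]
  have h1 : |b + n| ≤ |b| + n := (abs_add_le _ _).trans (by simp)
  have h2 : |b + n| * |w| ≤ (|b| + n) * |w| :=
    mul_le_mul_of_nonneg_right h1 (abs_nonneg w)
  have h4 : ρ * n ≤ ρ * ((n:ℝ) + 1) := by nlinarith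
  nlinarith [abs_nonneg (binC b n * w ^ n), abs_nonneg (binC b (n+1) * w ^ (n+1))]

lemma summable_binC_deriv {b r : ℝ} (hr0 : 0 ≤ r) (hr : r < 1) :
    Summable (fun k => |binC b k| * k * r ^ (k-1)) := by
  set ρ := (1 + r) / 2 with hρdef
  have hρ1 : ρ < 1 := by simp only [hρdef]; linarith
  have hwρ : r < ρ := by simp only [hρdef]; linarith
  have hρ0 : 0 ≤ ρ := le_trans hr0 hwρ.le
  refine summable_of_ratio_norm_eventually_le hρ1 ?_
  filter_upwards [ev_ratio (c := |b|) hr0 hwρ, eventually_ge_atTop 1] with n hn hn1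
  have hfk : ∀ k : ℕ, ‖|binC b k| * (k:ℝ) * r ^ (k-1)‖ = |binC b k| * (k:ℝ) * r ^ (k-1) :=
    fun k => by rw [Real.norm_eq_abs, abs_of_nonneg (by positivity)]
  rw [hfk, hfk]
  have e1 : |binC b (n+1)| * ((n:ℝ)+1) = |binC b n| * |b + n| := by
    have h := binC_succ b n
    have h2 : |((n:ℝ)+1) * binC b (n+1)| = |binC b n * (b + n)| := by rw [h]
    rw [abs_mul, abs_mul, abs_of_pos (by positivity : (0:ℝ) < (n:ℝ)+1)] at h2
    linarith
  have e1' : |binC b (n+1)| * ((n:ℝ)+1) * r ^ n = |binC b n| * |b + n| * r ^ n := by rw [e1]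
  have e2 : r ^ n = r * r ^ (n - 1) := by
    conv_lhs => rw [show n = 1 + (n-1) by omega]
    rw [pow_add, pow_one]
  have goal : |binC b n| * |b + n| * r ^ n ≤ ρ * (|binC b n| * n * r ^ (n-1)) := by
    rw [e2]
    have h1 : |b + n| ≤ |b| + n := (abs_add_le _ _).trans (by simp)
    have h2 : |b + n| * r ≤ ρ * n :=
      le_trans (mul_le_mul_of_nonneg_right h1 hr0) hn
    have h3 := mul_le_mul_of_nonneg_left h2
      (show (0:ℝ) ≤ |binC b n| * r ^ (n-1) by positivity)
    nlinarith
  rw [Nat.add_sub_cancel]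
  push_cast
  rw [e1']
  exact goal

noncomputable def Sb (b w : ℝ) : ℝ := ∑' k, binC b k * w ^ k
noncomputable def Db (b w : ℝ) : ℝ := ∑' k, binC b k * ((k:ℝ) * w ^ (k-1))

lemma summable_Db {b w : ℝ} (hw : |w| < 1) :
    Summable (fun k => binC b k * ((k:ℝ) * w ^ (k-1))) := by
  refine Summable.of_norm_bounded (summable_binC_deriv (b := b) (abs_nonneg w) hw) fun k => ?_
  show ‖binC b k * ((k:ℝ) * w ^ (k-1))‖ ≤ |binC b k| * k * |w| ^ (k-1)
  rw [Real.norm_eq_abs, abs_mul, abs_mul, abs_pow,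
    abs_of_nonneg (by positivity : (0:ℝ) ≤ (k:ℝ)), ← mul_assoc]

lemma hasDerivAt_Sb (b : ℝ) {w : ℝ} (hw : |w| < 1) : HasDerivAt (Sb b) (Db b w) w := by
  set r := (1 + |w|) / 2 with hrdef
  have hr1 : r < 1 := by simp only [hrdef]; linarith
  have hwr : |w| < r := by simp only [hrdef]; linarith
  have hr0 : 0 < r := lt_of_le_of_lt (abs_nonneg w) hwr
  have := hasDerivAt_tsum_of_isPreconnected
    (u := fun k => |binC b k| * k * r ^ (k-1))
    (g := fun k z => binC b k * z ^ k)
    (g' := fun k z => binC b k * ((k:ℝ) * z ^ (k-1)))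
    (t := Set.Ioo (-r) r) (y₀ := 0) (y := w)
    (summable_binC_deriv hr0.le hr1) isOpen_Ioo (convex_Ioo _ _).isPreconnected
    (fun n y _ => (hasDerivAt_pow n y).const_mul (binC b n))
    (fun n y hy => ?_) ⟨by linarith, hr0⟩
    (summable_binC (by simp : |(0:ℝ)| < 1)) (abs_lt.1 hwr)
  · exact this
  · have hyr : |y| ≤ r := (abs_lt.2 ⟨hy.1, hy.2⟩).le
    show ‖binC b n * ((n:ℝ) * y ^ (n-1))‖ ≤ |binC b n| * n * r ^ (n-1)
    rw [Real.norm_eq_abs, abs_mul, abs_mul, abs_pow,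
      abs_of_nonneg (by positivity : (0:ℝ) ≤ (n:ℝ)), ← mul_assoc]
    gcongr
    try exact abs_nonneg y

lemma ode_Sb (b : ℝ) {w : ℝ} (hw : |w| < 1) : (1 - w) * Db b w = b * Sb b w := by
  have hS := summable_binC (b := b) hw
  have hD := summable_Db (b := b) hw
  have termeq : ∀ k : ℕ, binC b (k+1) * (((k:ℝ)+1) * w ^ k)
      = b * (binC b k * w ^ k) + w * (binC b k * ((k:ℝ) * w ^ (k-1))) := by
    intro k
    have h := binC_succ b k
    have hkw : (k:ℝ) * w ^ k = w * ((k:ℝ) * w ^ (k-1)) := by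
      cases k with
      | zero => simp
      | succ m => rw [Nat.add_sub_cancel, pow_succ]; push_cast; ring
    linear_combination w ^ k * h + binC b k * hkw
  have h1 : Db b w = b * Sb b w + w * Db b w := by
    have h0 : Db b w = ∑' k, binC b (k+1) * (((k:ℝ)+1) * w ^ k) := by
      rw [Db, hD.tsum_eq_zero_add]
      simp only [Nat.cast_zero, zero_mul, mul_zero, zero_add]
      congr 1
      funext k
      rw [Nat.add_sub_cancel]
      push_cast
      ring
    conv_lhs => rw [h0]
    rw [tsum_congr termeq, Summable.tsum_add (hS.mul_left b) (hD.mul_left w), tsum_mul_left,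
      tsum_mul_left]
    rfl
  linear_combination h1

lemma Sb_eq (b : ℝ) {w : ℝ} (hw : |w| < 1) : Sb b w = (1 - w) ^ (-b) := by
  set φ : ℝ → ℝ := fun z => (1 - z) ^ b * Sb b z with hφ
  have hder : ∀ z ∈ Set.Ioo (-1:ℝ) 1, HasDerivAt φ 0 z := by
    intro z hz
    have hz1 : |z| < 1 := abs_lt.2 ⟨hz.1, hz.2⟩
    have h1z : (0:ℝ) < 1 - z := by linarith [hz.2]
    have hr : HasDerivAt (fun z : ℝ => (1 - z) ^ b) (b * (1 - z) ^ (b - 1) * (-1)) z := by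
      have hinner : HasDerivAt (fun z : ℝ => 1 - z) (-1) z := by
        simpa using (hasDerivAt_id z).const_sub 1
      exact (Real.hasDerivAt_rpow_const (x := 1 - z) (p := b) (Or.inl h1z.ne')).comp z hinner
    have hmul := hr.mul (hasDerivAt_Sb b hz1)
    refine hmul.congr_deriv ?_
    have hrpow : (1 - z) ^ b = (1 - z) ^ (b-1) * (1 - z) := by
      rw [← Real.rpow_add_one h1z.ne' (b-1)]
      ring_nf
    have hode := ode_Sb b hz1
    linear_combination (1-z:ℝ) ^ (b-1) * hode + Db b z * hrpow
  have hw1 : w < 1 := (abs_lt.1 hw).2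
  have hw1' : -1 < w := (abs_lt.1 hw).1
  have hw0 : φ w = φ 0 := by
    rcases le_or_gt 0 w with h | h
    · have := constant_of_has_deriv_right_zero (f := φ) (a := 0) (b := w)
        (fun z hz => ((hder z ⟨by linarith [hz.1], by linarith [hz.2]⟩).continuousAt).continuousWithinAt)
        (fun z hz => ((hder z ⟨by linarith [hz.1], by linarith [hz.2]⟩).hasDerivWithinAt))
      exact this w ⟨h, le_refl w⟩
    · have := constant_of_has_deriv_right_zero (f := φ) (a := w) (b := 0)
        (fun z hz => ((hder z ⟨by linarith [hz.1], by linarith [hz.2]⟩).continuousAt).continuousWithinAt)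
        (fun z hz => ((hder z ⟨by linarith [hz.1], by linarith [hz.2]⟩).hasDerivWithinAt))
      exact (this 0 ⟨h.le, le_refl 0⟩).symm
  have hSb0 : Sb b 0 = 1 := by
    rw [Sb, tsum_eq_single 0 (fun k hk => by simp [zero_pow hk])]
    simp [binC_zero]
  have hφ0 : φ 0 = 1 := by
    simp only [hφ, sub_zero, Real.one_rpow, one_mul, hSb0]
  have h1w : (0:ℝ) < 1 - w := by linarith
  have hkey : (1 - w) ^ b * Sb b w = 1 := by
    have h := hw0.trans hφ0
    simpa [hφ] using h
  rw [Real.rpow_neg h1w.le]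
  exact eq_inv_of_mul_eq_one_left ((mul_comm _ _).trans hkey)

lemma hasSum_binC (b : ℝ) {w : ℝ} (hw : |w| < 1) :
    HasSum (fun k => binC b k * w ^ k) ((1 - w) ^ (-b)) :=
  (Sb_eq b hw) ▸ (summable_binC hw).hasSum

noncomputable def Gf (b u v : ℝ) (p : ℕ × ℕ) : ℝ :=
  pochR b (p.1 + p.2) / (p.1.factorial * p.2.factorial) * u ^ p.1 * v ^ p.2

lemma Gf_row (b u v : ℝ) (m j : ℕ) :
    Gf b u v (m, j) = (binC b m * u ^ m) * (binC (b + m) j * v ^ j) := by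
  unfold Gf binC
  simp only
  rw [pochR_add]
  ring

section main
variable {b u v : ℝ}

lemma hasSum_Gf_row (hv : 0 ≤ v) (hv1 : v < 1) (b u : ℝ) (m : ℕ) :
    HasSum (fun j => Gf b u v (m, j)) ((binC b m * u ^ m) * (1 - v) ^ (-(b + m))) := by
  have habs : |v| < 1 := by rw [abs_of_nonneg hv]; linarith
  have h := (hasSum_binC (b + m) habs).mul_left (binC b m * u ^ m)
  rw [show (fun j => binC b m * u ^ m * (binC (b + (m:ℝ)) j * v ^ j))
      = (fun j => Gf b u v (m, j)) from funext fun j => (Gf_row b u v m j).symm] at h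
  exact h

lemma hasSum_Gf_col (hu : 0 ≤ u) (hv : 0 ≤ v) (huv : u + v < 1) (b : ℝ) :
    HasSum (fun m => (binC b m * u ^ m) * (1 - v) ^ (-(b + m))) ((1 - u - v) ^ (-b)) := by
  have h1v : (0:ℝ) < 1 - v := by linarith
  have hq : |u / (1 - v)| < 1 := by
    rw [abs_div, abs_of_nonneg hu, abs_of_pos h1v, div_lt_one h1v]; linarith
  have h := (hasSum_binC b hq).mul_left ((1 - v) ^ (-b))
  have hdiv : 1 - u / (1 - v) = (1 - u - v) / (1 - v) := by field_simp; ring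
  have hval : (1 - v) ^ (-b) * (1 - u / (1 - v)) ^ (-b) = ((1 - u - v):ℝ) ^ (-b) := by
    rw [hdiv, ← Real.mul_rpow h1v.le (div_nonneg (by linarith) h1v.le),
      mul_div_cancel₀ _ h1v.ne']
  have hterm : ∀ m : ℕ, (1 - v) ^ (-b) * (binC b m * (u / (1 - v)) ^ m)
      = (binC b m * u ^ m) * (1 - v) ^ (-(b + m)) := by
    intro m
    rw [div_pow, show -(b + (m:ℝ)) = -b + (-(m:ℝ)) by ring, Real.rpow_add h1v,
      Real.rpow_neg h1v.le ((m:ℝ)), Real.rpow_natCast]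
    have : ((1 - v) ^ m : ℝ) ≠ 0 := pow_ne_zero _ h1v.ne'
    field_simp
  rw [hval] at h
  rw [show (fun m => (1 - v) ^ (-b) * (binC b m * (u / (1 - v)) ^ m))
      = (fun m => (binC b m * u ^ m) * (1 - v) ^ (-(b + m))) from funext hterm] at h
  exact h

lemma Gf_nonneg (hb : 0 ≤ b) (hu : 0 ≤ u) (hv : 0 ≤ v) (p : ℕ × ℕ) : 0 ≤ Gf b u v p := by
  unfold Gf
  have := pochR_nonneg hb (p.1 + p.2)
  positivity

lemma summable_Gf (hu : 0 ≤ u) (hv : 0 ≤ v) (huv : u + v < 1) (b : ℝ) :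
    Summable (Gf b u v) := by
  set β := |b| with hβ
  have hβ0 : 0 ≤ β := abs_nonneg b
  have habs : ∀ p : ℕ × ℕ, ‖Gf b u v p‖ ≤ Gf β u v p := by
    intro p
    unfold Gf
    rw [Real.norm_eq_abs, abs_mul, abs_mul, abs_div, abs_of_nonneg (pow_nonneg hu _),
      abs_of_nonneg (pow_nonneg hv _),
      abs_of_nonneg (by positivity : (0:ℝ) ≤ (p.1.factorial : ℝ) * p.2.factorial)]
    gcongr
    all_goals first
      | exact abs_pochR_le b _
      | exact pow_nonneg hu _
      | exact pow_nonneg hv _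
      | positivity
  refine Summable.of_norm_bounded ?_ habs
  rw [summable_prod_of_nonneg (fun p => Gf_nonneg hβ0 hu hv p)]
  constructor
  · exact fun m => (hasSum_Gf_row hv (by linarith) β u m).summable
  · have : ∀ m : ℕ, ∑' j, Gf β u v (m, j) = (binC β m * u ^ m) * (1 - v) ^ (-(β + m)) :=
      fun m => (hasSum_Gf_row hv (by linarith) β u m).tsum_eq
    rw [funext this]
    exact (hasSum_Gf_col hu hv huv β).summable

lemma tsum_Gf (hu : 0 ≤ u) (hv : 0 ≤ v) (huv : u + v < 1) (b : ℝ) :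
    ∑' p : ℕ × ℕ, Gf b u v p = (1 - u - v) ^ (-b) := by
  rw [Summable.tsum_prod' (summable_Gf hu hv huv b)
    (fun m => (hasSum_Gf_row hv (by linarith) b u m).summable)]
  calc ∑' m, ∑' j, Gf b u v (m, j)
      = ∑' m, (binC b m * u ^ m) * (1 - v) ^ (-(b + m)) :=
        tsum_congr fun m => (hasSum_Gf_row hv (by linarith) b u m).tsum_eq
    _ = (1 - u - v) ^ (-b) := (hasSum_Gf_col hu hv huv b).tsum_eq

lemma summable_Gf_shift (hu : 0 ≤ u) (hv : 0 ≤ v) (huv : u + v < 1) (b : ℝ) :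
    Summable (fun p : ℕ × ℕ => Gf b u v (p.1 + 1, p.2 + 1)) := by
  have hinj : Function.Injective (fun p : ℕ × ℕ => (p.1 + 1, p.2 + 1)) := by
    intro p q h
    simp only [Prod.mk.injEq, Prod.ext_iff] at h ⊢
    omega
  exact (summable_Gf hu hv huv b).comp_injective hinj

lemma tsum_Gf_shift (hu : 0 ≤ u) (hv : 0 ≤ v) (huv : u + v < 1) (b : ℝ) :
    ∑' p : ℕ × ℕ, Gf b u v (p.1 + 1, p.2 + 1)
      = (1 - u - v) ^ (-b) - (1 - u) ^ (-b) - (1 - v) ^ (-b) + 1 := by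
  have hv1 : v < 1 := by linarith
  have hu1abs : |u| < 1 := by rw [abs_of_nonneg hu]; linarith
  have hrow : ∀ m, Summable (fun j => Gf b u v (m, j)) :=
    fun m => (hasSum_Gf_row hv hv1 b u m).summable
  have hR := hasSum_Gf_col hu hv huv b
  set R : ℕ → ℝ := fun m => (binC b m * u ^ m) * (1 - v) ^ (-(b + m)) with hRdef
  have hG0 : HasSum (fun m => Gf b u v (m, 0)) ((1 - u) ^ (-b)) := by
    have heq : ∀ m, Gf b u v (m, 0) = binC b m * u ^ m := by
      intro m; unfold Gf binC; simp
    rw [funext heq]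
    exact hasSum_binC b hu1abs
  have hinner : ∀ i : ℕ, ∑' j, Gf b u v (i + 1, j + 1) = R (i + 1) - Gf b u v (i + 1, 0) := by
    intro i
    have h := Summable.tsum_eq_zero_add (hrow (i + 1))
    have h2 := (hasSum_Gf_row hv hv1 b u (i + 1)).tsum_eq
    rw [h2] at h
    simp only [hRdef]
    linarith
  rw [Summable.tsum_prod' (summable_Gf_shift hu hv huv b)
    (fun i => (summable_nat_add_iff (f := fun j => Gf b u v (i + 1, j)) 1).2 (hrow (i + 1)))]
  calc ∑' i, ∑' j, Gf b u v (i + 1, j + 1)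
      = ∑' i, (R (i + 1) - Gf b u v (i + 1, 0)) := tsum_congr hinner
    _ = (∑' i, R (i + 1)) - ∑' i, Gf b u v (i + 1, 0) :=
        Summable.tsum_sub ((summable_nat_add_iff (f := R) 1).2 hR.summable)
          ((summable_nat_add_iff (f := fun m => Gf b u v (m, 0)) 1).2 hG0.summable)
    _ = (1 - u - v) ^ (-b) - (1 - u) ^ (-b) - (1 - v) ^ (-b) + 1 := by
        have e1 := Summable.tsum_eq_zero_add hR.summable
        have e2 := Summable.tsum_eq_zero_add hG0.summable
        rw [hR.tsum_eq] at e1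
        rw [hG0.tsum_eq] at e2
        have hR0 : R 0 = (1 - v) ^ (-b) := by
          simp [hRdef, binC_zero]
        have hGf00 : Gf b u v (0, 0) = 1 := by
          unfold Gf pochR; simp
        rw [hR0] at e1
        rw [hGf00] at e2
        linarith

end main

lemma pochR_two_eq (x : ℝ) : pochR x 2 = x * (x + 1) := by
  unfold pochR
  rw [Finset.prod_range_succ, Finset.prod_range_succ, Finset.prod_range_zero]
  push_cast; ring

lemma pochR_shift2 (b : ℝ) (n : ℕ) :
    pochR b (n + 2) = b * (b + 1) * pochR (b + 2) n := by
  rw [show n + 2 = 2 + n by ring, pochR_add, pochR_two_eq]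
  norm_num

lemma appell_closed {a u v : ℝ} (ha : a < 1) (hu : 0 < u) (hv : 0 < v) (huv : u + v < 1) :
    appellF2R a 1 1 2 2 u v =
      ((1 - u - v) ^ (2-a) - (1 - u) ^ (2-a) - (1 - v) ^ (2-a) + 1)
        / ((a-2) * (a-1) * u * v) := by
  have ha1 : a - 1 ≠ 0 := by intro h; linarith [sub_eq_zero.1 h]
  have ha2 : a - 2 ≠ 0 := by intro h; nlinarith [sub_eq_zero.1 h]
  have hK : (a-2) * (a-1) * u * v ≠ 0 := by
    apply mul_ne_zero (mul_ne_zero (mul_ne_zero ha2 ha1) hu.ne') hv.ne'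
  have hterm : ∀ p : ℕ × ℕ,
      pochR a (p.1 + p.2) * pochR 1 p.1 * pochR 1 p.2 /
        (pochR 2 p.1 * pochR 2 p.2 * (Nat.factorial p.1 : ℝ) * (Nat.factorial p.2 : ℝ)) *
        u ^ p.1 * v ^ p.2
      = ((a-2) * (a-1) * u * v)⁻¹ * Gf (a-2) u v (p.1 + 1, p.2 + 1) := by
    rintro ⟨i, j⟩
    simp only [Gf]
    rw [pochR_one, pochR_one, pochR_two, pochR_two,
      show (i + 1) + (j + 1) = (i + j) + 2 by ring, pochR_shift2,
      show a - 2 + 1 = a - 1 by ring, show a - 2 + 2 = a by ring]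
    have hfi : (Nat.factorial i : ℝ) ≠ 0 := Nat.cast_ne_zero.2 (Nat.factorial_ne_zero _)
    have hfj : (Nat.factorial j : ℝ) ≠ 0 := Nat.cast_ne_zero.2 (Nat.factorial_ne_zero _)
    have hfi1 : (Nat.factorial (i+1) : ℝ) ≠ 0 := Nat.cast_ne_zero.2 (Nat.factorial_ne_zero _)
    have hfj1 : (Nat.factorial (j+1) : ℝ) ≠ 0 := Nat.cast_ne_zero.2 (Nat.factorial_ne_zero _)
    field_simp
    ring
  rw [appellF2R, tsum_congr hterm, tsum_mul_left,
    tsum_Gf_shift hu.le hv.le huv (a-2),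
    show -(a-2) = 2 - a by ring, inv_mul_eq_div]

lemma hyp_closed {a z : ℝ} (ha : a < 1) (hz : |z| < 1) (hz0 : z ≠ 0) :
    hyp2F1R 1 (a-1) 2 z = ((1 - z) ^ (2-a) - 1) / ((a-2) * z) := by
  have ha2 : a - 2 ≠ 0 := by intro h; nlinarith [sub_eq_zero.1 h]
  have hterm : ∀ k : ℕ,
      pochR 1 k * pochR (a-1) k / (pochR 2 k * (Nat.factorial k : ℝ)) * z ^ k
      = ((a-2) * z)⁻¹ * (binC (a-2) (k+1) * z ^ (k+1)) := by
    intro k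
    rw [pochR_one, pochR_two]
    unfold binC
    rw [show k + 1 = 1 + k by ring, pochR_add,
      show pochR (a-2) 1 = a - 2 by unfold pochR; simp,
      show a - 2 + (1:ℕ) = a - 1 by push_cast; ring]
    have hfk : (Nat.factorial k : ℝ) ≠ 0 := Nat.cast_ne_zero.2 (Nat.factorial_ne_zero _)
    have hfk1 : (Nat.factorial (1+k) : ℝ) ≠ 0 := Nat.cast_ne_zero.2 (Nat.factorial_ne_zero _)
    rw [pow_add, pow_one, show (1:ℕ) + k = k + 1 from by ring, Nat.factorial_succ]
    field_simp
  have hsh := Summable.tsum_eq_zero_add (summable_binC (b := a-2) hz)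
  rw [(hasSum_binC (a-2) hz).tsum_eq] at hsh
  rw [hyp2F1R, tsum_congr hterm, tsum_mul_left]
  have : ∑' (k : ℕ), binC (a-2) (k+1) * z ^ (k+1)
      = (1 - z) ^ (-(a-2)) - 1 := by
    have h0 : binC (a-2) 0 * z ^ 0 = 1 := by rw [binC_zero]; simp
    linarith [hsh, h0]
  rw [this, show -(a-2) = 2 - a by ring, inv_mul_eq_div]

theorem stmt_7 (a x : ℝ) (ha : a < 1) (hx0 : 0 < x) (hx1 : x < 1 / 2) :
    Tendsto (fun t : ℝ => appellF2R a 1 1 2 2 (t * x) (t * (1 - x))) (𝓝[<] 1)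
      (𝓝 (1 / (1 - a) * (1 - x) ^ (-a) * hyp2F1R 1 (a - 1) 2 (x / (x - 1)) +
        -(x ^ (2 - a) / ((1 - a) * (2 - a) * x * (1 - x))))) ∧
    -(x ^ (2 - a) / ((1 - a) * (2 - a) * x * (1 - x))) ≠ 0 := by
  have hx1' : x < 1 := by linarith
  have h1x : (0:ℝ) < 1 - x := by linarith
  have h1a : (0:ℝ) < 1 - a := by linarith
  have h2a : (0:ℝ) < 2 - a := by linarith
  have ha1 : a - 1 ≠ 0 := by intro h; linarith [sub_eq_zero.1 h]
  have ha2 : a - 2 ≠ 0 := by intro h; nlinarith [sub_eq_zero.1 h]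
  have hxE : (0:ℝ) < x ^ (2-a) := Real.rpow_pos_of_pos hx0 _
  have hden : (0:ℝ) < (1 - a) * (2 - a) * x * (1 - x) := by positivity
  constructor
  · -- the limit
    set z : ℝ := x / (x - 1) with hzdef
    have hxm1 : x - 1 ≠ 0 := by intro h; linarith [sub_eq_zero.1 h]
    have hz0 : z ≠ 0 := div_ne_zero hx0.ne' hxm1
    have hzabs : |z| < 1 := by
      rw [hzdef, abs_div, abs_of_pos hx0, abs_of_neg (by linarith : x - 1 < 0),
        div_lt_one (by linarith : (0:ℝ) < -(x-1))]
      linarith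
    have hz1 : 1 - z = (1 - x)⁻¹ := by
      rw [hzdef]; field_simp; ring
    have hz2 : ((1:ℝ) - z) ^ (2-a) = (1 - x) ^ (a-2) := by
      rw [hz1, ← Real.rpow_neg_one (1-x), ← Real.rpow_mul h1x.le,
        show (-1) * (2-a) = a - 2 by ring]
    -- value of hyp term
    have hhyp : hyp2F1R 1 (a-1) 2 z = ((1 - x) ^ (a-2) - 1) / ((a-2) * z) := by
      rw [hyp_closed ha hzabs hz0, hz2]
    -- rpow relations
    have hQ : (1 - x) ^ (-a) = (1-x) ^ (2-a) * ((1-x)^2)⁻¹ := by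
      have h2 : ((1-x)^2 : ℝ)⁻¹ = (1-x) ^ (-2 : ℝ) := by
        rw [← Real.rpow_natCast (1-x) 2, ← Real.rpow_neg h1x.le]; norm_num
      rw [h2, ← Real.rpow_add h1x, show 2 - a + (-2 : ℝ) = -a by ring]
    have hAQ : (1 - x) ^ (a-2) = ((1-x) ^ (2-a))⁻¹ := by
      rw [← Real.rpow_neg h1x.le, show -(2-a) = a - 2 by ring]
    -- target value equals closed limit value
    have hval : 1 / (1 - a) * (1 - x) ^ (-a) * hyp2F1R 1 (a - 1) 2 (x / (x - 1)) +
        -(x ^ (2 - a) / ((1 - a) * (2 - a) * x * (1 - x)))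
      = (1 - (1-x)^(2-a) - x^(2-a)) / ((a-2) * (a-1) * x * (1-x)) := by
      rw [← hzdef, hhyp, hAQ, hQ, hzdef]
      have hQ0 : ((1-x) ^ (2-a) : ℝ) ≠ 0 := (Real.rpow_pos_of_pos h1x _).ne'
      have h1x2 : ((1-x)^2 : ℝ) ≠ 0 := pow_ne_zero _ h1x.ne'
      field_simp
      ring
    rw [hval]
    -- limit of the closed form
    have hcont : ContinuousAt (fun t : ℝ =>
        ((1 - t*x - t*(1-x)) ^ (2-a) - (1 - t*x) ^ (2-a) - (1 - t*(1-x)) ^ (2-a) + 1)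
          / ((a-2) * (a-1) * (t*x) * (t*(1-x)))) 1 := by
      have c1 : ContinuousAt (fun t : ℝ => (1 - t*x - t*(1-x)) ^ (2-a)) 1 :=
        ContinuousAt.comp (x := (1:ℝ))
          (Real.continuousAt_rpow_const _ (2-a) (Or.inr h2a.le)) (by fun_prop)
      have c2 : ContinuousAt (fun t : ℝ => (1 - t*x) ^ (2-a)) 1 :=
        ContinuousAt.comp (x := (1:ℝ))
          (Real.continuousAt_rpow_const _ (2-a) (Or.inl (by intro h; linarith))) (by fun_prop)
      have c3 : ContinuousAt (fun t : ℝ => (1 - t*(1-x)) ^ (2-a)) 1 :=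
        ContinuousAt.comp (x := (1:ℝ))
          (Real.continuousAt_rpow_const _ (2-a) (Or.inl (by intro h; linarith))) (by fun_prop)
      exact (((c1.sub c2).sub c3).add continuousAt_const).div (by fun_prop)
        (by simp only [one_mul]
            exact mul_ne_zero (mul_ne_zero (mul_ne_zero ha2 ha1) hx0.ne') h1x.ne')
    have hF1 : ((1 - 1*x - 1*(1-x)) ^ (2-a) - (1 - 1*x) ^ (2-a) - (1 - 1*(1-x)) ^ (2-a) + 1)
          / ((a-2) * (a-1) * (1*x) * (1*(1-x)))
        = (1 - (1-x)^(2-a) - x^(2-a)) / ((a-2) * (a-1) * x * (1-x)) := by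
      rw [show (1:ℝ) - 1*x - 1*(1-x) = 0 by ring, Real.zero_rpow h2a.ne',
        show (1:ℝ) - 1*x = 1 - x by ring, show (1:ℝ) - 1*(1-x) = x by ring]
      ring_nf
    have hlim : Tendsto (fun t : ℝ =>
        ((1 - t*x - t*(1-x)) ^ (2-a) - (1 - t*x) ^ (2-a) - (1 - t*(1-x)) ^ (2-a) + 1)
          / ((a-2) * (a-1) * (t*x) * (t*(1-x)))) (𝓝[<] 1)
        (𝓝 ((1 - (1-x)^(2-a) - x^(2-a)) / ((a-2) * (a-1) * x * (1-x)))) := by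
      have := hcont.tendsto.mono_left (nhdsWithin_le_nhds (s := Set.Iio (1:ℝ)))
      rwa [hF1] at this
    refine hlim.congr' ?_
    filter_upwards [Ioo_mem_nhdsLT_of_mem (show (1:ℝ) ∈ Set.Ioc 0 1 from ⟨one_pos, le_refl 1⟩)]
      with t ht
    have ht0 : 0 < t := ht.1
    have ht1 : t < 1 := ht.2
    have h1 := appell_closed (u := t*x) (v := t*(1-x)) ha (by positivity) (by positivity)
      (by nlinarith)
    rw [h1]
  · -- nonzero
    exact neg_ne_zero.2 (div_ne_zero hxE.ne' hden.ne')
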